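/- The epistemic value satisfies 1 − ev(Θ∖H | x) ≤ P(H|x) for every hypothesis H: the posterior probability of T(Θ∖H) is at most the posterior probability of H. -/
import Mathlib


open MeasureTheory

def tangentSet {Θ : Type*} (s : Θ → ℝ) (H : Set Θ) : Set Θ :=
  {θ₁ | ∀ θ₀ ∈ H, s θ₁ > s θ₀}

noncomputable def ev {Θ : Type*} [MeasurableSpace Θ] (P : Measure Θ) (s : Θ → ℝ)
    (H : Set Θ) : ENNReal :=
  1 - P (tangentSet s H)

theorem stmt_9 {Θ : Type*} [MeasurableSpace Θ] (P : Measure Θ) [IsProbabilityMeasure P]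
    (s : Θ → ℝ) (H : Set Θ) :
    1 - ev P s Hᶜ ≤ P H := by
  have hsub : tangentSet s Hᶜ ⊆ H := by
    intro θ hθ
    by_contra hc
    exact lt_irrefl _ (hθ θ hc)
  calc 1 - ev P s Hᶜ ≤ P (tangentSet s Hᶜ) := by
        unfold ev
        exact tsub_tsub_le
    _ ≤ P H := measure_mono hsub
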